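/- Let K := L(λ) ∩ J. The saturation of K with respect to x_{m−1} equals the saturation of L(λ) with respect to x_{m−1}; that is, {g ∈ R : x_{m−1}^t · g ∈ K for some integer t ≥ 0} = {g ∈ R : x_{m−1}^t · g ∈ L(λ) for some integer t ≥ 0}. -/

import Mathlib

open MvPolynomial
open Fin.NatCast

noncomputable section

/-- `a_j`: the number of parts of the partition `l 1 ≥ l 2 ≥ ⋯ ≥ l r` equal to `j`. -/
def partCount (r : ℕ) (l : ℕ → ℕ) (j : ℕ) : ℕ :=
  ((Finset.Icc 1 r).filter fun i => l i = j).card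

/-- The generators of the lexicographic ideal `L(λ)`. -/
def lexGens (k : Type*) [Field k] (m r : ℕ) (l : ℕ → ℕ) :
    Set (MvPolynomial (Fin (m + 1)) k) :=
  { f | ∃ kk : ℕ, kk + 2 ≤ m ∧
      f = (∏ t ∈ Finset.range kk, X ((t : ℕ) : Fin (m + 1)) ^ partCount r l (m - t)) *
            X ((kk : ℕ) : Fin (m + 1)) ^ (partCount r l (m - kk) + 1) }
  ∪ { (∏ t ∈ Finset.range (m - 1), X ((t : ℕ) : Fin (m + 1)) ^ partCount r l (m - t)) *
        X (((m - 1 : ℕ)) : Fin (m + 1)) ^ partCount r l 1 }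

/-- The lexicographic ideal `L(λ)` associated to the partition `λ`. -/
def lexIdeal (k : Type*) [Field k] (m r : ℕ) (l : ℕ → ℕ) :
    Ideal (MvPolynomial (Fin (m + 1)) k) :=
  Ideal.span (lexGens k m r l)

/-- The monomial ideal `J = ⟨x_0, …, x_{m−λ₁−2}, x_{m−λ₁−1}², x_{m−λ₁}, …, x_{m−1}⟩`. -/
def Jideal (k : Type*) [Field k] (m l1 : ℕ) : Ideal (MvPolynomial (Fin (m + 1)) k) :=
  Ideal.span
    ({ f | ∃ i : ℕ, i < m ∧ i ≠ m - l1 - 1 ∧ f = X ((i : ℕ) : Fin (m + 1)) }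
      ∪ { (X (((m - l1 - 1 : ℕ)) : Fin (m + 1))) ^ 2 })

/-- For `K := L(λ) ∩ J`, the saturation of `K` with respect to `x_{m−1}`
equals the saturation of `L(λ)` with respect to `x_{m−1}`. -/
theorem saturation_lexIdeal_inf_Jideal (k : Type*) [Field k] (m r : ℕ)
    (hr : 1 ≤ r) (l : ℕ → ℕ)
    (hanti : AntitoneOn l (Set.Icc 1 r)) (hpos : ∀ i ∈ Set.Icc 1 r, 1 ≤ l i)
    (hlt : l 1 < m) :
    { g : MvPolynomial (Fin (m + 1)) k | ∃ t : ℕ,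
        X (((m - 1 : ℕ)) : Fin (m + 1)) ^ t * g ∈ lexIdeal k m r l ⊓ Jideal k m (l 1) } =
    { g : MvPolynomial (Fin (m + 1)) k | ∃ t : ℕ,
        X (((m - 1 : ℕ)) : Fin (m + 1)) ^ t * g ∈ lexIdeal k m r l } := by
  have h1 : 1 ≤ l 1 := hpos 1 ⟨le_refl 1, hr⟩
  have hX : X (((m - 1 : ℕ)) : Fin (m + 1)) ∈ Jideal k m (l 1) :=
    Ideal.subset_span (Or.inl ⟨m - 1, by omega, by omega, rfl⟩)
  ext g
  simp only [Set.mem_setOf_eq, Ideal.mem_inf]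
  constructor
  · rintro ⟨t, hL, _⟩; exact ⟨t, hL⟩
  · rintro ⟨t, hL⟩
    refine ⟨t + 1, ?_, ?_⟩
    · have heq : X (((m - 1 : ℕ)) : Fin (m + 1)) ^ (t + 1) * g =
        X (((m - 1 : ℕ)) : Fin (m + 1)) * (X (((m - 1 : ℕ)) : Fin (m + 1)) ^ t * g) := by
        ring
      rw [heq]
      exact Ideal.mul_mem_left _ _ hL
    · have heq : X (((m - 1 : ℕ)) : Fin (m + 1)) ^ (t + 1) * g =
        X (((m - 1 : ℕ)) : Fin (m + 1)) * (X (((m - 1 : ℕ)) : Fin (m + 1)) ^ t * g) := by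
        ring
      rw [heq]
      exact Ideal.mul_mem_right _ _ hX

end
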